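/- Let f_a(x) = -x + Σ_{j≥2} a_j x^j be an analytic map and write f_a(f_a(x)) = x + Σ_{j≥3} W_j(a₂,...,a_j) x^j. Then each W_j is a polynomial in (a₂,...,a_j) which is quasi-homogeneous of quasi-degree j-1 with weights (1,2,...,j-1); that is, W_j(λa₂, λ²a₃, ..., λ^{j-1}a_j) = λ^{j-1} W_j(a₂,...,a_j) for all λ ∈ ℝ. -/

import Mathlib

open Topology

lemma aux_coeff_eq {u : ℝ → ℝ} {p : FormalMultilinearSeries ℝ ℝ ℝ}
    (h : HasFPowerSeriesAt u p 0) (n : ℕ) :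
    p.coeff n = iteratedDeriv n u 0 / (n.factorial : ℝ) := by
  obtain ⟨r, hr⟩ := h
  have h2 := hr.factorial_smul (1:ℝ) n
  have h3 : iteratedDeriv n u 0 = iteratedFDeriv ℝ n u 0 (fun _ => (1:ℝ)) := rfl
  rw [h3, ← h2]
  simp only [nsmul_eq_mul, FormalMultilinearSeries.coeff]
  have : (n.factorial : ℝ) ≠ 0 := Nat.cast_ne_zero.mpr n.factorial_ne_zero
  field_simp
  rfl

lemma aux_comp_coeff (p : FormalMultilinearSeries ℝ ℝ ℝ) (n : ℕ) :
    (p.comp p).coeff n =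
      ∑ c : Composition n, (∏ i, p.coeff (c.blocksFun i)) * p.coeff c.length := by
  rw [FormalMultilinearSeries.coeff]
  show (∑ c : Composition n, p.compAlongComposition p c) 1 = _
  rw [ContinuousMultilinearMap.sum_apply]
  refine Finset.sum_congr rfl fun c _ => ?_
  rw [FormalMultilinearSeries.compAlongComposition_apply]
  have h1 : p.applyComposition c 1 = fun i => p.coeff (c.blocksFun i) := by
    funext i
    simp only [FormalMultilinearSeries.applyComposition, FormalMultilinearSeries.coeff]
    congr
  rw [h1, FormalMultilinearSeries.apply_eq_prod_smul_coeff, smul_eq_mul]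

theorem stmt3 (a : ℕ → ℝ) (l : ℝ) (f g : ℝ → ℝ)
    (hf : AnalyticAt ℝ f 0) (hg : AnalyticAt ℝ g 0)
    (hf0 : f 0 = 0) (hg0 : g 0 = 0)
    (hf1 : deriv f 0 = -1) (hg1 : deriv g 0 = -1)
    (hfa : ∀ j, 2 ≤ j → iteratedDeriv j f 0 / (j.factorial : ℝ) = a j)
    (hga : ∀ j, 2 ≤ j → iteratedDeriv j g 0 / (j.factorial : ℝ) = l ^ (j - 1) * a j)
    (j : ℕ) (hj : 3 ≤ j) :
    iteratedDeriv j (g ∘ g) 0 / (j.factorial : ℝ) =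
      l ^ (j - 1) * (iteratedDeriv j (f ∘ f) 0 / (j.factorial : ℝ)) := by
  obtain ⟨p, hp⟩ := hf
  obtain ⟨q, hq⟩ := hg
  have hpf : HasFPowerSeriesAt f p (f 0) := by rwa [hf0]
  have hqg : HasFPowerSeriesAt g q (g 0) := by rwa [hg0]
  have hPP : HasFPowerSeriesAt (f ∘ f) (p.comp p) 0 := hpf.comp hp
  have hQQ : HasFPowerSeriesAt (g ∘ g) (q.comp q) 0 := hqg.comp hq
  rw [← aux_coeff_eq hPP j, ← aux_coeff_eq hQQ j]
  have hrel : ∀ n, q.coeff n = l ^ (n - 1) * p.coeff n := by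
    intro n
    match n with
    | 0 => simp [aux_coeff_eq hp 0, aux_coeff_eq hq 0, hf0, hg0]
    | 1 => simp [aux_coeff_eq hp 1, aux_coeff_eq hq 1, iteratedDeriv_one, hf1, hg1]
    | (m+2) =>
      rw [aux_coeff_eq hp, aux_coeff_eq hq, hfa _ (by omega), hga _ (by omega)]
  rw [aux_comp_coeff, aux_comp_coeff, Finset.mul_sum]
  refine Finset.sum_congr rfl fun c _ => ?_
  have hk : 1 ≤ c.length := c.length_pos_of_pos (by omega)
  have hkj : c.length ≤ j := c.length_le
  have h2 : (∑ i, (c.blocksFun i - 1)) + c.length = j := by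
    calc (∑ i, (c.blocksFun i - 1)) + c.length
        = ∑ i, ((c.blocksFun i - 1) + 1) := by
          rw [Finset.sum_add_distrib]; simp
      _ = ∑ i, c.blocksFun i := by
          refine Finset.sum_congr rfl fun i _ => ?_
          have := c.one_le_blocksFun i; omega
      _ = j := c.sum_blocksFun
  have hprod : (∏ i, q.coeff (c.blocksFun i))
      = l ^ (j - c.length) * ∏ i, p.coeff (c.blocksFun i) := by
    simp only [hrel]
    rw [Finset.prod_mul_distrib, Finset.prod_pow_eq_pow_sum]
    congr 2
    omega
  rw [hprod, hrel c.length,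
    show j - 1 = (j - c.length) + (c.length - 1) from by omega, pow_add]
  ring
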